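/- Let p ≥ 1, N ≥ 1, let b > 0, γ ∈ (0,1), D ≥ 0, let q_1,…,q_N ≥ 0 with Σ_n q_n = 1, and for each n let e^n ∈ ℝ^p have nonnegative entries with Σ_{j=1}^p e^n_j = b. Define π_j = (1−γ) Σ_{n=1}^N q_n e^n_j + γb/p. Let I ⊆ {1,…,p}, let d_1,…,d_p satisfy 0 ≤ d_j ≤ D, and set d̂_j = d_j/π_j for j ∈ I and d̂_j = 0 otherwise, and y_n = Σ_{j=1}^p e^n_j d̂_j. Then Σ_{n=1}^N q_n y_n² ≤ (bD/(1−γ)) · Σ_{j∈I} d̂_j. -/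

import Mathlib

theorem exp4_second_moment_bound (p N : ℕ) (hp : 1 ≤ p) (hN : 1 ≤ N)
    (b γ D : ℝ) (hb : 0 < b) (hγ : γ ∈ Set.Ioo (0 : ℝ) 1) (hD : 0 ≤ D)
    (q : Fin N → ℝ) (hq0 : ∀ n, 0 ≤ q n) (hq1 : ∑ n, q n = 1)
    (e : Fin N → Fin p → ℝ) (he0 : ∀ n j, 0 ≤ e n j) (hesum : ∀ n, ∑ j, e n j = b)
    (π : Fin p → ℝ)
    (hπ : ∀ j, π j = (1 - γ) * ∑ n, q n * e n j + γ * b / p)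
    (I : Finset (Fin p)) (d : Fin p → ℝ) (hd : ∀ j, 0 ≤ d j ∧ d j ≤ D)
    (dhat : Fin p → ℝ)
    (hdhat : ∀ j, dhat j = if j ∈ I then d j / π j else 0)
    (y : Fin N → ℝ) (hy : ∀ n, y n = ∑ j, e n j * dhat j) :
    ∑ n, q n * y n ^ 2 ≤ (b * D / (1 - γ)) * ∑ j ∈ I, dhat j := by
  obtain ⟨hγ0, hγ1⟩ := hγ
  have h1γ : (0:ℝ) < 1 - γ := by linarith
  have hppos : (0:ℝ) < p := by exact_mod_cast Nat.lt_of_lt_of_le Nat.zero_lt_one hp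
  have hπpos : ∀ j, 0 < π j := by
    intro j
    rw [hπ j]
    have h1 : 0 ≤ (1 - γ) * ∑ n, q n * e n j :=
      mul_nonneg h1γ.le (Finset.sum_nonneg fun n _ => mul_nonneg (hq0 n) (he0 n j))
    have h2 : 0 < γ * b / p := div_pos (mul_pos hγ0 hb) hppos
    linarith
  have hdh0 : ∀ j, 0 ≤ dhat j := by
    intro j
    rw [hdhat j]
    split
    · exact div_nonneg (hd j).1 (hπpos j).le
    · exact le_refl 0
  -- Cauchy-Schwarz per expert
  have hcs : ∀ n, y n ^ 2 ≤ b * ∑ j, e n j * dhat j ^ 2 := by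
    intro n
    have h := Finset.sum_mul_sq_le_sq_mul_sq Finset.univ
      (fun j => Real.sqrt (e n j)) (fun j => Real.sqrt (e n j) * dhat j)
    have heq1 : ∑ j, Real.sqrt (e n j) * (Real.sqrt (e n j) * dhat j)
        = ∑ j, e n j * dhat j := by
      apply Finset.sum_congr rfl
      intro j _
      rw [← mul_assoc, Real.mul_self_sqrt (he0 n j)]
    have heq2 : ∑ j, Real.sqrt (e n j) ^ 2 = b := by
      rw [← hesum n]
      exact Finset.sum_congr rfl fun j _ => Real.sq_sqrt (he0 n j)
    have heq3 : ∑ j, (Real.sqrt (e n j) * dhat j) ^ 2 = ∑ j, e n j * dhat j ^ 2 := by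
      apply Finset.sum_congr rfl
      intro j _
      rw [mul_pow, Real.sq_sqrt (he0 n j)]
    rw [heq1, heq2, heq3] at h
    calc y n ^ 2 = (∑ j, e n j * dhat j) ^ 2 := by rw [hy n]
      _ ≤ b * ∑ j, e n j * dhat j ^ 2 := h
  have step2 : ∑ n, q n * y n ^ 2 ≤ b * ∑ j, (∑ n, q n * e n j) * dhat j ^ 2 := by
    have : ∑ n, q n * y n ^ 2 ≤ ∑ n, q n * (b * ∑ j, e n j * dhat j ^ 2) :=
      Finset.sum_le_sum fun n _ => mul_le_mul_of_nonneg_left (hcs n) (hq0 n)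
    refine this.trans_eq ?_
    rw [Finset.mul_sum]
    calc ∑ n, q n * (b * ∑ j, e n j * dhat j ^ 2)
        = ∑ n, ∑ j, b * (q n * (e n j * dhat j ^ 2)) := by
          refine Finset.sum_congr rfl fun n _ => ?_
          rw [Finset.mul_sum, Finset.mul_sum]
          exact Finset.sum_congr rfl fun j _ => by ring
      _ = ∑ j, ∑ n, b * (q n * (e n j * dhat j ^ 2)) := Finset.sum_comm
      _ = ∑ j, b * ((∑ n, q n * e n j) * dhat j ^ 2) := by
          refine Finset.sum_congr rfl fun j _ => ?_
          rw [Finset.sum_mul, Finset.mul_sum]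
          exact Finset.sum_congr rfl fun n _ => by ring
  have step3 : ∀ j, (∑ n, q n * e n j) ≤ π j / (1 - γ) := by
    intro j
    rw [hπ j]
    rw [le_div_iff₀ h1γ]
    have h2 : 0 < γ * b / p := div_pos (mul_pos hγ0 hb) hppos
    nlinarith [Finset.sum_nonneg (fun n (_ : n ∈ Finset.univ) => mul_nonneg (hq0 n) (he0 n j))]
  have step4 : ∀ j, π j * dhat j ^ 2 = (if j ∈ I then d j * dhat j else 0) := by
    intro j
    rw [hdhat j]
    split
    · have hne := (hπpos j).ne'
      field_simp
    · ring
  have step5 : b * ∑ j, (∑ n, q n * e n j) * dhat j ^ 2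
      ≤ (b * D / (1 - γ)) * ∑ j ∈ I, dhat j := by
    have h1 : ∀ j, (∑ n, q n * e n j) * dhat j ^ 2 ≤ (π j / (1 - γ)) * dhat j ^ 2 :=
      fun j => mul_le_mul_of_nonneg_right (step3 j) (sq_nonneg _)
    have h2 : ∑ j, (∑ n, q n * e n j) * dhat j ^ 2 ≤ ∑ j, (π j / (1 - γ)) * dhat j ^ 2 :=
      Finset.sum_le_sum fun j _ => h1 j
    have h3 : ∑ j, (π j / (1 - γ)) * dhat j ^ 2
        = (1 / (1 - γ)) * ∑ j ∈ I, d j * dhat j := by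
      calc ∑ j, (π j / (1 - γ)) * dhat j ^ 2
          = (1 / (1 - γ)) * ∑ j, π j * dhat j ^ 2 := by
            rw [Finset.mul_sum]
            exact Finset.sum_congr rfl fun j _ => by ring
        _ = (1 / (1 - γ)) * ∑ j, (if j ∈ I then d j * dhat j else 0) := by
            rw [Finset.sum_congr rfl fun j _ => step4 j]
        _ = (1 / (1 - γ)) * ∑ j ∈ I, d j * dhat j := by
            rw [Finset.sum_ite_mem, Finset.univ_inter]
    have h4 : ∑ j ∈ I, d j * dhat j ≤ D * ∑ j ∈ I, dhat j := by
      rw [Finset.mul_sum]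
      exact Finset.sum_le_sum fun j _ => mul_le_mul_of_nonneg_right (hd j).2 (hdh0 j)
    calc b * ∑ j, (∑ n, q n * e n j) * dhat j ^ 2
        ≤ b * ∑ j, (π j / (1 - γ)) * dhat j ^ 2 := by
          exact mul_le_mul_of_nonneg_left h2 hb.le
      _ = b * ((1 / (1 - γ)) * ∑ j ∈ I, d j * dhat j) := by rw [h3]
      _ ≤ b * ((1 / (1 - γ)) * (D * ∑ j ∈ I, dhat j)) := by
          apply mul_le_mul_of_nonneg_left _ hb.le
          exact mul_le_mul_of_nonneg_left h4 (by positivity)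
      _ = (b * D / (1 - γ)) * ∑ j ∈ I, dhat j := by ring
  exact step2.trans step5
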